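/- arXiv:2412.16327 — 4 statements merged into one kernel-verified Lean document; each statement's English description precedes it below -/
import Mathlib

section
/- Let a, b ≥ 0 with a + b = 1 and let C₁, C₂ ≥ 0. Then min(3·C₂, 3·C₁ + (11/8)·b·C₂) ≤ (9 / ((11/8)·b² − (11/8)·b + 3)) · (a·C₁ + b·C₂). -/
theorem msr_bipoint_averaging (a b C₁ C₂ : ℝ) (ha : 0 ≤ a) (hb : 0 ≤ b)
    (hab : a + b = 1) (hC₁ : 0 ≤ C₁) (hC₂ : 0 ≤ C₂) :
    min (3 * C₂) (3 * C₁ + (11/8) * b * C₂) ≤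
      (9 / ((11/8) * b^2 - (11/8) * b + 3)) * (a * C₁ + b * C₂) := by
  have hD : (0:ℝ) < (11/8) * b^2 - (11/8) * b + 3 := by nlinarith [sq_nonneg (b - 1/2)]
  rw [div_mul_eq_mul_div 9 _ (a * C₁ + b * C₂), le_div_iff₀ hD]
  rcases le_total (3 * C₂) (3 * C₁ + (11/8) * b * C₂) with h | h
  · rw [min_eq_left h]
    nlinarith [mul_nonneg ha (sub_nonneg.mpr h), mul_nonneg hb hC₂, mul_nonneg ha hC₁,
      mul_nonneg (mul_nonneg hb hb) hC₂]
  · rw [min_eq_right h]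
    nlinarith [mul_nonneg (mul_nonneg hb hb) (sub_nonneg.mpr h),
      mul_nonneg hb (sub_nonneg.mpr h), mul_nonneg hb hC₂, mul_nonneg ha hC₁]
end

section
/- Let a, b ≥ 0 with a + b = 1 and let C₁, C₂ ≥ 0. Then min(6·C₂, 6·C₁ + 2·b·C₂) ≤ (36 / (2·b² − 2·b + 6)) · (a·C₁ + b·C₂), and 36 / (2·b² − 2·b + 6) ≤ 72/11 for all b ∈ [0,1]. -/
theorem msd_bipoint_averaging (a b C₁ C₂ : ℝ) (ha : 0 ≤ a) (hb : 0 ≤ b)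
    (hab : a + b = 1) (hC₁ : 0 ≤ C₁) (hC₂ : 0 ≤ C₂) :
    min (6 * C₂) (6 * C₁ + 2 * b * C₂) ≤
      (36 / (2 * b^2 - 2 * b + 6)) * (a * C₁ + b * C₂) ∧
    36 / (2 * b^2 - 2 * b + 6) ≤ 72/11 := by
  have hD : (0:ℝ) < 2 * b^2 - 2 * b + 6 := by nlinarith [sq_nonneg (b - 1)]
  constructor
  · rw [div_mul_eq_mul_div, le_div_iff₀ hD]
    rcases le_total (6 * C₂) (6 * C₁ + 2 * b * C₂) with h | h
    · rw [min_eq_left h]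
      nlinarith [mul_nonneg hb hC₂, mul_nonneg ha hC₁, mul_nonneg (mul_nonneg hb hb) hC₂,
        mul_nonneg hb (sub_nonneg.mpr h)]
    · rw [min_eq_right h]
      nlinarith [mul_nonneg hb hC₂, mul_nonneg ha hC₁, mul_nonneg (mul_nonneg hb hb) hC₂,
        mul_nonneg ha (sub_nonneg.mpr h), mul_nonneg hb (sub_nonneg.mpr h)]
  · rw [div_le_div_iff₀ hD (by norm_num)]
    nlinarith [sq_nonneg (2*b - 1)]
end

section
/- Let a, b ≥ 0 with a + b = 1 and C₁, C₂ ≥ 0. Then min(9·C₂, 9·C₁ + (27/4)·b·C₂) ≤ (81 / ((27/4)·b² − (27/4)·b + 9)) · (a·C₁ + b·C₂). -/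
theorem mssr_bipoint_averaging (a b C₁ C₂ : ℝ) (ha : 0 ≤ a) (hb : 0 ≤ b)
    (hab : a + b = 1) (hC₁ : 0 ≤ C₁) (hC₂ : 0 ≤ C₂) :
    min (9 * C₂) (9 * C₁ + (27/4) * b * C₂) ≤
      (81 / ((27/4) * b^2 - (27/4) * b + 9)) * (a * C₁ + b * C₂) := by
  have hD : (0:ℝ) < (27/4) * b^2 - (27/4) * b + 9 := by
    nlinarith [sq_nonneg (b - 1/2)]
  rw [show (81 / ((27/4) * b^2 - (27/4) * b + 9)) * (a * C₁ + b * C₂)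
      = 81 * (a * C₁ + b * C₂) / ((27/4) * b^2 - (27/4) * b + 9) from by ring,
    le_div_iff₀ hD]
  set t : ℝ := 9 * a / ((27/4) * b^2 - (27/4) * b + 9) with ht
  have ht0 : 0 ≤ t := by positivity
  have ht1 : t ≤ 1 := by
    rw [ht, div_le_one hD]; nlinarith
  have htD : t * ((27/4) * b^2 - (27/4) * b + 9) = 9 * a := by
    rw [ht, div_mul_cancel₀ _ hD.ne']
  have hmin : min (9 * C₂) (9 * C₁ + (27/4) * b * C₂) ≤
      (1 - t) * (9 * C₂) + t * (9 * C₁ + (27/4) * b * C₂) := by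
    have h1 := min_le_left (9 * C₂) (9 * C₁ + (27/4) * b * C₂)
    have h2 := min_le_right (9 * C₂) (9 * C₁ + (27/4) * b * C₂)
    nlinarith [mul_le_mul_of_nonneg_left h1 (by linarith : (0:ℝ) ≤ 1 - t),
      mul_le_mul_of_nonneg_left h2 ht0]
  have hstep : min (9 * C₂) (9 * C₁ + (27/4) * b * C₂) *
      ((27/4) * b^2 - (27/4) * b + 9) ≤
      ((1 - t) * (9 * C₂) + t * (9 * C₁ + (27/4) * b * C₂)) *
      ((27/4) * b^2 - (27/4) * b + 9) :=
    mul_le_mul_of_nonneg_right hmin hD.le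
  have hb' : a = 1 - b := by linarith
  have heq : ((1 - t) * (9 * C₂) + t * (9 * C₁ + (27/4) * b * C₂)) *
      ((27/4) * b^2 - (27/4) * b + 9) = 81 * (a * C₁ + b * C₂) := by
    have expand : ((1 - t) * (9 * C₂) + t * (9 * C₁ + (27/4) * b * C₂)) *
        ((27/4) * b^2 - (27/4) * b + 9) =
        (9 * C₂) * ((27/4) * b^2 - (27/4) * b + 9)
          - (t * ((27/4) * b^2 - (27/4) * b + 9)) * (9 * C₂)
          + (t * ((27/4) * b^2 - (27/4) * b + 9)) * (9 * C₁ + (27/4) * b * C₂) := by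
      ring
    rw [expand, htD, hb']
    ring
  linarith [hstep, heq.le]
end

section
/- Let R₁, R₂, R₃ ≥ 0 with R₃ ≤ R₂. Then min(R₁ + 4·R₂, max(3·R₂, 2·R₁ + R₂ + 4·R₃), max(4·R₂, 2·R₁ + 4·R₃)) ≤ (11/8)·R₁ + 3·(R₂ + R₃). -/
theorem group_center_choice (R₁ R₂ R₃ : ℝ) (h1 : 0 ≤ R₁) (h2 : 0 ≤ R₂)
    (h3 : 0 ≤ R₃) (h4 : R₃ ≤ R₂) :
    min (R₁ + 4 * R₂)
      (min (max (3 * R₂) (2 * R₁ + R₂ + 4 * R₃))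
           (max (4 * R₂) (2 * R₁ + 4 * R₃))) ≤
    (11/8) * R₁ + 3 * (R₂ + R₃) := by
  rcases le_or_gt (2 * R₁ + R₂ + 4 * R₃) (3 * R₂) with h | h
  · refine le_trans (min_le_right _ _) (le_trans (min_le_left _ _) ?_)
    rw [max_eq_left h]; nlinarith
  rcases le_or_gt (5/8 * R₁ + R₃) (2 * R₂) with h' | h'
  · refine le_trans (min_le_right _ _) (le_trans (min_le_left _ _) ?_)
    rw [max_eq_right h.le]; nlinarith
  · exact le_trans (min_le_left _ _) (by nlinarith)
end
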